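/- If each L_j : R^d → R is twice continuously differentiable with Hessians uniformly bounded by L (i.e., −L·I ⪯ ∇²L_j ⪯ L·I) and gradients bounded by B, and q ∈ Δ^K is fixed, then the function r(Φ) = −∑_j q_j log γ_j(Φ) (with γ the softmax of −L_j(φ_j)) has Hessian bounded in operator norm by L + B², hence r is (L+B²)-smooth. -/

import Mathlib

open scoped RealInnerProductSpace

set_option linter.unusedSectionVars false
set_option maxHeartbeats 1000000

section Generic
variable {E : Type*} [NormedAddCommGroup E] [InnerProductSpace ℝ E] [CompleteSpace E]

lemma inner_gradient_eq (f : E → ℝ) (x v : E) :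
    ⟪gradient f x, v⟫ = fderiv ℝ f x v := by
  rw [gradient, InnerProductSpace.toDual_symm_apply]

lemma line_hasDerivAt (x v : E) (t : ℝ) :
    HasDerivAt (fun s : ℝ => x + s • v) v t := by
  simpa using ((hasDerivAt_id t).smul_const v).const_add x

lemma line_deriv2 (f : E → ℝ) (hf : ContDiff ℝ 2 f) (x v : E) :
    deriv (deriv (fun t : ℝ => f (x + t • v))) 0 = fderiv ℝ (fderiv ℝ f) x v v := by
  have hdiff : Differentiable ℝ f := hf.differentiable (by norm_num)
  have hd1 : ∀ t : ℝ, HasDerivAt (fun s : ℝ => f (x + s • v))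
      (fderiv ℝ f (x + t • v) v) t := fun t =>
    (hdiff _).hasFDerivAt.comp_hasDerivAt t (line_hasDerivAt x v t)
  have e1 : deriv (fun s : ℝ => f (x + s • v)) = fun t => fderiv ℝ f (x + t • v) v :=
    funext fun t => (hd1 t).deriv
  rw [e1]
  have hC1 : ContDiff ℝ 1 (fderiv ℝ f) := hf.fderiv_right (by norm_num)
  have hD : HasFDerivAt (fderiv ℝ f) (fderiv ℝ (fderiv ℝ f) x) x :=
    ((hC1.differentiable one_ne_zero) x).hasFDerivAt
  have h0 : HasDerivAt (fun t : ℝ => fderiv ℝ f (x + t • v))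
      (fderiv ℝ (fderiv ℝ f) x v) 0 := by
    have hD' : HasFDerivAt (fderiv ℝ f) (fderiv ℝ (fderiv ℝ f) x) (x + (0:ℝ) • v) := by
      simpa using hD
    exact hD'.comp_hasDerivAt (x := (0:ℝ)) (line_hasDerivAt x v 0)
  have h2 : HasDerivAt (fun t : ℝ => fderiv ℝ f (x + t • v) v)
      (fderiv ℝ (fderiv ℝ f) x v v) 0 :=
    (ContinuousLinearMap.apply ℝ ℝ v).hasFDerivAt.comp_hasDerivAt 0 h0
  exact h2.deriv

lemma opnorm_of_quad (A : E →L[ℝ] E) (hsymm : ∀ v w : E, ⟪A v, w⟫ = ⟪v, A w⟫)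
    (C : ℝ) (hC : 0 ≤ C) (hquad : ∀ v : E, |⟪v, A v⟫| ≤ C * ‖v‖ ^ 2) : ‖A‖ ≤ C := by
  have key : ∀ v w : E, 4 * ⟪A v, w⟫ = ⟪v + w, A (v + w)⟫ - ⟪v - w, A (v - w)⟫ := by
    intro v w
    have h1 : ⟪w, A v⟫ = ⟪A v, w⟫ := real_inner_comm _ _
    have h2 : ⟪v, A w⟫ = ⟪A v, w⟫ := (hsymm v w).symm
    simp only [map_add, map_sub, inner_add_add_self, inner_sub_sub_self,
      inner_add_left, inner_add_right, inner_sub_left, inner_sub_right]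
    ring_nf
    linarith [h2]
  have half : ∀ v w : E, |⟪A v, w⟫| ≤ C * (‖v‖ ^ 2 + ‖w‖ ^ 2) / 2 := by
    intro v w
    have h4 : |4 * ⟪A v, w⟫| ≤ C * ‖v + w‖ ^ 2 + C * ‖v - w‖ ^ 2 := by
      rw [key v w]
      calc |⟪v + w, A (v+w)⟫ - ⟪v - w, A (v-w)⟫|
          ≤ |⟪v + w, A (v+w)⟫| + |⟪v - w, A (v-w)⟫| := abs_sub _ _
        _ ≤ C * ‖v + w‖ ^ 2 + C * ‖v - w‖ ^ 2 := add_le_add (hquad _) (hquad _)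
    have hpar : ‖v + w‖ ^ 2 + ‖v - w‖ ^ 2 = 2 * (‖v‖ ^ 2 + ‖w‖ ^ 2) := by
      have := parallelogram_law_with_norm ℝ v w
      nlinarith [this]
    rw [abs_mul, abs_of_nonneg (by norm_num : (0:ℝ) ≤ 4)] at h4
    nlinarith [h4, hpar]
  have bilin : ∀ v w : E, |⟪A v, w⟫| ≤ C * ‖v‖ * ‖w‖ := by
    intro v w
    rcases eq_or_ne v 0 with rfl | hv
    · simp
    rcases eq_or_ne w 0 with rfl | hw
    · simp
    have hv' : (0:ℝ) < ‖v‖ := norm_pos_iff.2 hv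
    have hw' : (0:ℝ) < ‖w‖ := norm_pos_iff.2 hw
    set s : ℝ := Real.sqrt (‖w‖ / ‖v‖) with hs
    have hspos : 0 < s := Real.sqrt_pos.2 (by positivity)
    have hs2 : s ^ 2 = ‖w‖ / ‖v‖ := Real.sq_sqrt (by positivity)
    have e : ⟪A (s • v), s⁻¹ • w⟫ = ⟪A v, w⟫ := by
      rw [map_smul, real_inner_smul_left, real_inner_smul_right]
      field_simp
    have := half (s • v) (s⁻¹ • w)
    rw [e] at this
    have hn1 : ‖s • v‖ ^ 2 = s ^ 2 * ‖v‖ ^ 2 := by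
      rw [norm_smul]; simp [abs_of_pos hspos]; ring
    have hn2 : ‖s⁻¹ • w‖ ^ 2 = (s ^ 2)⁻¹ * ‖w‖ ^ 2 := by
      rw [norm_smul]; simp [abs_of_pos hspos]; ring
    rw [hn1, hn2, hs2] at this
    have heq : C * (‖w‖ / ‖v‖ * ‖v‖ ^ 2 + (‖w‖ / ‖v‖)⁻¹ * ‖w‖ ^ 2) / 2 = C * ‖v‖ * ‖w‖ := by
      field_simp
      ring
    rw [heq] at this
    exact this
  refine A.opNorm_le_bound hC fun v => ?_
  rcases eq_or_ne (A v) 0 with h0 | h0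
  · simp [h0]; positivity
  have h1 : ‖A v‖ ^ 2 = ⟪A v, A v⟫ := (real_inner_self_eq_norm_sq _).symm
  have h2 : ⟪A v, A v⟫ ≤ C * ‖v‖ * ‖A v‖ := le_trans (le_abs_self _) (bilin v (A v))
  have hAv : (0:ℝ) < ‖A v‖ := norm_pos_iff.2 h0
  nlinarith [h1, h2, hAv]

lemma lipschitz_gradient_of_quad (f : E → ℝ) (hf : ContDiff ℝ 2 f) (C : ℝ) (hC : 0 ≤ C)
    (hquad : ∀ x v : E, |deriv (deriv (fun t : ℝ => f (x + t • v))) 0| ≤ C * ‖v‖ ^ 2) :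
    LipschitzWith C.toNNReal (fun x => gradient f x) := by
  set e : (E →L[ℝ] ℝ) ≃L[ℝ] E :=
    (InnerProductSpace.toDual ℝ E).symm.toContinuousLinearEquiv with he
  have hC1 : ContDiff ℝ 1 (fderiv ℝ f) := hf.fderiv_right (by norm_num)
  have hgrad : ∀ x : E, HasFDerivAt (fun y => gradient f y)
      ((e : (E →L[ℝ] ℝ) →L[ℝ] E) ∘L fderiv ℝ (fderiv ℝ f) x) x := by
    intro x
    have hD : HasFDerivAt (fderiv ℝ f) (fderiv ℝ (fderiv ℝ f) x) x :=
      ((hC1.differentiable one_ne_zero) x).hasFDerivAt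
    exact (e.toContinuousLinearMap.hasFDerivAt).comp x hD
  have hdiff : Differentiable ℝ (fun y => gradient f y) := fun x => (hgrad x).differentiableAt
  apply lipschitzWith_of_nnnorm_fderiv_le hdiff
  intro x
  have hfd : fderiv ℝ (fun y => gradient f y) x
      = (e : (E →L[ℝ] ℝ) →L[ℝ] E) ∘L fderiv ℝ (fderiv ℝ f) x := (hgrad x).fderiv
  have hinner : ∀ v w : E, ⟪fderiv ℝ (fun y => gradient f y) x v, w⟫
      = fderiv ℝ (fderiv ℝ f) x v w := by
    intro v w
    rw [hfd]
    exact InnerProductSpace.toDual_symm_apply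
  have hsymmf : ∀ v w : E, fderiv ℝ (fderiv ℝ f) x v w = fderiv ℝ (fderiv ℝ f) x w v :=
    fun v w => (hf.contDiffAt.isSymmSndFDerivAt (by simp)) v w
  have hnorm : ‖fderiv ℝ (fun y => gradient f y) x‖ ≤ C := by
    apply opnorm_of_quad _ _ C hC
    · intro v
      rw [real_inner_comm, hinner v v, ← line_deriv2 f hf x v]
      exact hquad x v
    · intro v w
      rw [hinner v w, real_inner_comm, hinner w v]
      exact hsymmf v w
  rw [← norm_toNNReal]
  exact Real.toNNReal_mono hnorm

end Generic

lemma aux_field (Qb Ea Ea2 Eb St : ℝ) (h : St ≠ 0) :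
    Qb + ((Ea2 - Eb) * St - -Ea * -Ea) / St ^ 2
      = (Qb - Eb / St) + (Ea2 / St - (Ea / St) ^ 2) := by
  field_simp
  ring

/-- If each `L_j` is `C²` with Hessian quadratic form bounded by `Lc`
(`−Lc·I ⪯ ∇²L_j ⪯ Lc·I`) and gradient bounded by `B`, and `q ∈ Δ^K` is fixed, then
`r(Φ) = −∑_j q_j log γ_j(Φ)`, with `γ` the softmax of `−L_j(φ_j)`, is
`(Lc + B²)`-smooth, i.e. its gradient is `(Lc + B²)`-Lipschitz. -/
theorem kl_softmax_smooth (K d : ℕ)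
    (L : Fin K → EuclideanSpace ℝ (Fin d) → ℝ)
    (hC2 : ∀ j, ContDiff ℝ 2 (L j))
    (Lc B : ℝ) (hLc : 0 ≤ Lc) (hB : 0 ≤ B)
    (hHess : ∀ j (φ v : EuclideanSpace ℝ (Fin d)),
      |⟪v, fderiv ℝ (fun ψ => gradient (L j) ψ) φ v⟫| ≤ Lc * ‖v‖ ^ 2)
    (hApprox : ∀ j (φ : EuclideanSpace ℝ (Fin d)), ‖gradient (L j) φ‖ ≤ B)
    (q : Fin K → ℝ) (hq0 : ∀ j, 0 ≤ q j) (hq1 : ∑ j, q j = 1)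
    (γ : PiLp 2 (fun _ : Fin K => EuclideanSpace ℝ (Fin d)) → Fin K → ℝ)
    (hγ : ∀ Φ j, γ Φ j = Real.exp (-(L j (Φ j))) / ∑ j', Real.exp (-(L j' (Φ j'))))
    (r : PiLp 2 (fun _ : Fin K => EuclideanSpace ℝ (Fin d)) → ℝ)
    (hr : ∀ Φ, r Φ = -∑ j, q j * Real.log (γ Φ j)) :
    LipschitzWith ((Lc + B ^ 2).toNNReal) (fun Φ => gradient r Φ) := by
  classical
  rcases Nat.eq_zero_or_pos K with rfl | hK
  · simp at hq1
  have hne : Nonempty (Fin K) := ⟨⟨0, hK⟩⟩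
  -- positivity of the partition function
  set S : PiLp 2 (fun _ : Fin K => EuclideanSpace ℝ (Fin d)) → ℝ :=
    fun Φ => ∑ j', Real.exp (-(L j' (Φ j'))) with hSdef
  have hSpos : ∀ Φ, 0 < S Φ := fun Φ =>
    Finset.sum_pos (fun j _ => Real.exp_pos _) ⟨⟨0, hK⟩, Finset.mem_univ _⟩
  -- rewrite r
  have hrid : ∀ Φ, r Φ = (∑ j, q j * L j (Φ j)) + Real.log (S Φ) := by
    intro Φ
    rw [hr]
    have hlog : ∀ j, Real.log (γ Φ j) = -(L j (Φ j)) - Real.log (S Φ) := by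
      intro j
      rw [hγ, Real.log_div (Real.exp_ne_zero _) (hSpos Φ).ne', Real.log_exp]
    have h2 : ∑ j, q j * Real.log (γ Φ j)
        = -((∑ j, q j * L j (Φ j)) + Real.log (S Φ)) := by
      simp only [hlog, mul_sub, mul_neg, Finset.sum_sub_distrib, Finset.sum_neg_distrib]
      rw [← Finset.sum_mul, hq1]
      ring
    rw [h2, neg_neg]
  -- smoothness of r
  have hLproj : ∀ j, ContDiff ℝ 2
      (fun Φ : PiLp 2 (fun _ : Fin K => EuclideanSpace ℝ (Fin d)) => L j (Φ j)) :=
    fun j => (hC2 j).comp (PiLp.proj (𝕜 := ℝ) 2 (fun _ : Fin K => EuclideanSpace ℝ (Fin d)) j).contDiff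
  have hScd : ContDiff ℝ 2 S := ContDiff.sum fun j _ => ((hLproj j).neg).exp
  have hrcd : ContDiff ℝ 2 r := by
    have hfe : r = fun Φ => (∑ j, q j * L j (Φ j)) + Real.log (S Φ) := funext hrid
    rw [hfe]
    exact (ContDiff.sum fun j _ => (contDiff_const.mul (hLproj j))).add
      (hScd.log fun Φ => (hSpos Φ).ne')
  -- gradient of each L j is C¹
  have hGcd : ∀ j, ContDiff ℝ 1 (fun ψ => gradient (L j) ψ) := by
    intro j
    have hfe : (fun ψ => gradient (L j) ψ)
        = fun ψ => (InnerProductSpace.toDual ℝ (EuclideanSpace ℝ (Fin d))).symm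
            (fderiv ℝ (L j) ψ) := rfl
    rw [hfe]
    exact ((InnerProductSpace.toDual ℝ (EuclideanSpace ℝ (Fin d))).symm.toContinuousLinearEquiv.contDiff).comp
      ((hC2 j).fderiv_right (by norm_num))
  -- main quadratic bound
  apply lipschitz_gradient_of_quad r hrcd _ (by positivity)
  intro Φ V
  set c : Fin K → ℝ → EuclideanSpace ℝ (Fin d) := fun j t => Φ j + t • V j with hcdef
  set a : Fin K → ℝ → ℝ := fun j t => ⟪gradient (L j) (c j t), V j⟫ with hadef
  set b : Fin K → ℝ → ℝ := fun j t =>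
    ⟪fderiv ℝ (fun ψ => gradient (L j) ψ) (c j t) (V j), V j⟫ with hbdef
  set ee : Fin K → ℝ → ℝ := fun j t => Real.exp (-(L j (c j t))) with heedef
  set St : ℝ → ℝ := fun t => ∑ j, ee j t with hStdef
  have hline : ∀ (j : Fin K) (t : ℝ), HasDerivAt (fun s : ℝ => c j s) (V j) t := by
    intro j t
    simp only [hcdef]
    exact line_hasDerivAt (Φ j) (V j) t
  have hah : ∀ (j : Fin K) (t : ℝ), HasDerivAt (fun s => L j (c j s)) (a j t) t := by
    intro j t
    have h1 : HasDerivAt (fun s => L j (c j s)) (fderiv ℝ (L j) (c j t) (V j)) t :=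
      ((hC2 j).differentiable (by norm_num) _).hasFDerivAt.comp_hasDerivAt t (hline j t)
    have h2 : a j t = fderiv ℝ (L j) (c j t) (V j) := inner_gradient_eq _ _ _
    rw [h2]; exact h1
  have hadiff : ∀ (j : Fin K) (t : ℝ), HasDerivAt (fun s => a j s) (b j t) t := by
    intro j t
    have h1 : HasDerivAt (fun s => gradient (L j) (c j s))
        (fderiv ℝ (fun ψ => gradient (L j) ψ) (c j t) (V j)) t :=
      (((hGcd j).differentiable one_ne_zero) _).hasFDerivAt.comp_hasDerivAt t (hline j t)
    have h2 := h1.inner ℝ (hasDerivAt_const t (V j))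
    simpa only [inner_zero_right, zero_add] using h2
  have haB : ∀ (j : Fin K) (t : ℝ), |a j t| ≤ B * ‖V j‖ := fun j t =>
    (abs_real_inner_le_norm _ _).trans
      (mul_le_mul_of_nonneg_right (hApprox j _) (norm_nonneg _))
  have hbL : ∀ (j : Fin K) (t : ℝ), |b j t| ≤ Lc * ‖V j‖ ^ 2 := by
    intro j t
    have h := hHess j (c j t) (V j)
    rw [real_inner_comm] at h
    exact h
  have hee' : ∀ (j : Fin K) (t : ℝ), HasDerivAt (fun s => ee j s) (ee j t * -(a j t)) t :=
    fun j t => ((hah j t).neg).exp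
  have hStpos : ∀ t, 0 < St t := fun t =>
    Finset.sum_pos (fun j _ => Real.exp_pos _) ⟨⟨0, hK⟩, Finset.mem_univ _⟩
  have hgeq : (fun t : ℝ => r (Φ + t • V))
      = fun t => (∑ j, q j * L j (c j t)) + Real.log (St t) := by
    funext t
    rw [hrid (Φ + t • V)]
    rfl
  have hg1 : ∀ t : ℝ, HasDerivAt (fun t : ℝ => r (Φ + t • V))
      ((∑ j, q j * a j t) + (∑ j, ee j t * -(a j t)) / St t) t := by
    intro t
    rw [hgeq]
    apply HasDerivAt.add
    · exact HasDerivAt.fun_sum fun j _ => (hah j t).const_mul (q j)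
    · have hS' : HasDerivAt (fun s => St s) (∑ j, ee j t * -(a j t)) t :=
        HasDerivAt.fun_sum fun j _ => hee' j t
      exact hS'.log (hStpos t).ne'
  have hg2 : HasDerivAt (fun t : ℝ => (∑ j, q j * a j t) + (∑ j, ee j t * -(a j t)) / St t)
      ((∑ j, q j * b j 0)
        + ((∑ j, ((ee j 0 * -(a j 0)) * -(a j 0) + ee j 0 * -(b j 0))) * St 0
            - (∑ j, ee j 0 * -(a j 0)) * (∑ j, ee j 0 * -(a j 0))) / St 0 ^ 2) 0 := by
    apply HasDerivAt.add
    · exact HasDerivAt.fun_sum fun j _ => (hadiff j 0).const_mul (q j)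
    · exact HasDerivAt.div
        (HasDerivAt.fun_sum fun j _ => (hee' j 0).fun_mul ((hadiff j 0).fun_neg))
        (HasDerivAt.fun_sum fun j _ => hee' j 0) (hStpos 0).ne'
  have hDval : deriv (deriv (fun t : ℝ => r (Φ + t • V))) 0
      = (∑ j, q j * b j 0)
        + ((∑ j, ((ee j 0 * -(a j 0)) * -(a j 0) + ee j 0 * -(b j 0))) * St 0
            - (∑ j, ee j 0 * -(a j 0)) * (∑ j, ee j 0 * -(a j 0))) / St 0 ^ 2 := by
    have e1 : deriv (fun t : ℝ => r (Φ + t • V))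
        = fun t => (∑ j, q j * a j t) + (∑ j, ee j t * -(a j t)) / St t :=
      funext fun t => (hg1 t).deriv
    rw [e1]
    exact hg2.deriv
  rw [hDval]
  -- now the numeric bound
  set γv : Fin K → ℝ := fun j => ee j 0 / St 0 with hγvdef
  have heepos : ∀ j, 0 < ee j 0 := fun j => Real.exp_pos _
  have hγ0 : ∀ j, 0 ≤ γv j := fun j => div_nonneg (heepos j).le (hStpos 0).le
  have hγle : ∀ j, γv j ≤ 1 := by
    intro j
    rw [hγvdef]
    rw [div_le_one (hStpos 0)]
    exact Finset.single_le_sum (f := fun j => ee j 0) (fun i _ => (heepos i).le)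
      (Finset.mem_univ j)
  have hγsum : ∑ j, γv j = 1 := by
    simp only [hγvdef]
    rw [← Finset.sum_div, div_self (hStpos 0).ne']
  have hqle : ∀ j, q j ≤ 1 := fun j =>
    hq1 ▸ Finset.single_le_sum (fun i _ => hq0 i) (Finset.mem_univ j)
  -- rewrite the value in terms of γv
  have hDeq : (∑ j, q j * b j 0)
        + ((∑ j, ((ee j 0 * -(a j 0)) * -(a j 0) + ee j 0 * -(b j 0))) * St 0
            - (∑ j, ee j 0 * -(a j 0)) * (∑ j, ee j 0 * -(a j 0))) / St 0 ^ 2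
      = (∑ j, (q j - γv j) * b j 0)
        + ((∑ j, γv j * (a j 0) ^ 2) - (∑ j, γv j * a j 0) ^ 2) := by
    have e1 : (∑ j, ((ee j 0 * -(a j 0)) * -(a j 0) + ee j 0 * -(b j 0)))
        = (∑ j, ee j 0 * (a j 0) ^ 2) - ∑ j, ee j 0 * b j 0 := by
      rw [← Finset.sum_sub_distrib]
      exact Finset.sum_congr rfl fun j _ => by ring
    have e2 : (∑ j, ee j 0 * -(a j 0)) = -∑ j, ee j 0 * a j 0 := by
      simp [mul_neg]
    have e3 : ∀ (x : Fin K → ℝ), ∑ j, γv j * x j = (∑ j, ee j 0 * x j) / St 0 := by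
      intro x
      calc ∑ j, γv j * x j = ∑ j, (ee j 0 * x j) / St 0 :=
            Finset.sum_congr rfl fun j _ => by rw [hγvdef]; ring
        _ = (∑ j, ee j 0 * x j) / St 0 := (Finset.sum_div _ _ _).symm
    have e4 : ∑ j, (q j - γv j) * b j 0
        = (∑ j, q j * b j 0) - (∑ j, ee j 0 * b j 0) / St 0 := by
      simp only [sub_mul, Finset.sum_sub_distrib]
      rw [e3 (fun j => b j 0)]
    rw [e1, e2, e4, e3 (fun j => (a j 0) ^ 2), e3 (fun j => a j 0)]
    exact aux_field (∑ j, q j * b j 0) (∑ j, ee j 0 * a j 0) (∑ j, ee j 0 * (a j 0) ^ 2)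
      (∑ j, ee j 0 * b j 0) (St 0) (hStpos 0).ne'
  rw [hDeq]
  -- bound the two pieces
  have hW : ‖V‖ ^ 2 = ∑ j, ‖V j‖ ^ 2 := PiLp.norm_sq_eq_of_L2 _ V
  have hT1 : |∑ j, (q j - γv j) * b j 0| ≤ Lc * ∑ j, ‖V j‖ ^ 2 := by
    refine (Finset.abs_sum_le_sum_abs _ _).trans ?_
    rw [Finset.mul_sum]
    refine Finset.sum_le_sum fun j _ => ?_
    rw [abs_mul]
    have h1 : |q j - γv j| ≤ 1 := by
      rw [abs_le]
      constructor <;> [linarith [hq0 j, hγle j]; linarith [hγ0 j, hqle j]]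
    calc |q j - γv j| * |b j 0| ≤ 1 * (Lc * ‖V j‖ ^ 2) :=
          mul_le_mul h1 (hbL j 0) (abs_nonneg _) zero_le_one
      _ = Lc * ‖V j‖ ^ 2 := one_mul _
  have hCS : (∑ j, γv j * a j 0) ^ 2 ≤ ∑ j, γv j * (a j 0) ^ 2 := by
    have h := Finset.sum_mul_sq_le_sq_mul_sq Finset.univ
      (fun j => Real.sqrt (γv j)) (fun j => Real.sqrt (γv j) * a j 0)
    have e1 : ∀ j : Fin K, Real.sqrt (γv j) * (Real.sqrt (γv j) * a j 0) = γv j * a j 0 := by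
      intro j
      rw [← mul_assoc, Real.mul_self_sqrt (hγ0 j)]
    have e2 : ∀ j : Fin K, Real.sqrt (γv j) ^ 2 = γv j := fun j => Real.sq_sqrt (hγ0 j)
    have e3 : ∀ j : Fin K, (Real.sqrt (γv j) * a j 0) ^ 2 = γv j * (a j 0) ^ 2 := by
      intro j
      rw [mul_pow, e2 j]
    simp only [e1, e2, e3] at h
    rwa [hγsum, one_mul] at h
  have hT2u : ∑ j, γv j * (a j 0) ^ 2 ≤ B ^ 2 * ∑ j, ‖V j‖ ^ 2 := by
    rw [Finset.mul_sum]
    refine Finset.sum_le_sum fun j _ => ?_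
    have h1 : (a j 0) ^ 2 ≤ B ^ 2 * ‖V j‖ ^ 2 := by
      have := haB j 0
      nlinarith [abs_nonneg (a j 0), sq_abs (a j 0)]
    calc γv j * (a j 0) ^ 2 ≤ 1 * (a j 0) ^ 2 :=
          mul_le_mul_of_nonneg_right (hγle j) (sq_nonneg _)
      _ = (a j 0) ^ 2 := one_mul _
      _ ≤ B ^ 2 * ‖V j‖ ^ 2 := h1
  have hT2nn : 0 ≤ (∑ j, γv j * (a j 0) ^ 2) - (∑ j, γv j * a j 0) ^ 2 := by
    linarith [hCS]
  have hsum : 0 ≤ ∑ j, ‖V j‖ ^ 2 := Finset.sum_nonneg fun j _ => sq_nonneg _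
  rw [hW]
  calc |(∑ j, (q j - γv j) * b j 0)
        + ((∑ j, γv j * (a j 0) ^ 2) - (∑ j, γv j * a j 0) ^ 2)|
      ≤ |∑ j, (q j - γv j) * b j 0|
        + |(∑ j, γv j * (a j 0) ^ 2) - (∑ j, γv j * a j 0) ^ 2| := abs_add_le _ _
    _ ≤ Lc * (∑ j, ‖V j‖ ^ 2) + B ^ 2 * (∑ j, ‖V j‖ ^ 2) := by
        refine add_le_add hT1 ?_
        rw [abs_of_nonneg hT2nn]
        have := hT2u
        nlinarith [sq_nonneg (∑ j, γv j * a j 0)]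
    _ = (Lc + B ^ 2) * ∑ j, ‖V j‖ ^ 2 := by ring
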